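/- Fix an integer t ≥ 1 and an integer k ≥ 1. Then ⋃_{m=1}^{k} C_m = { x ∈ ℝ^{t+1} : x_0 ≥ x_1 ≥ … ≥ x_{t−1} ≥ 0, ⟨u_0, x⟩ ≥ 0, and ⟨u_k, x⟩ < 0 }. -/

import Mathlib

/-- The generator `v_i ∈ ℝ^{t+1}`: coordinates `0,…,(i-1) mod t` equal `1`, the remaining
coordinates among `0,…,t-1` equal `0`, and the last coordinate equals `((i-1) div t)·t`. -/
noncomputable def geneV (t : ℕ) (i : ℕ) : Fin (t + 1) → ℝ := fun l =>
  if (l : ℕ) = t then (((i - 1) / t) * t : ℕ)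
  else if (l : ℕ) ≤ (i - 1) % t then 1 else 0

/-- The half-open simplicial cone `C_m`, generated by `v_m, …, v_{m+t}` with the facet
opposite the first generator open. -/
noncomputable def coneC (t : ℕ) (m : ℕ) : Set (Fin (t + 1) → ℝ) :=
  { x | ∃ α : Fin (t + 1) → ℝ, 0 < α 0 ∧ (∀ i, 0 ≤ α i) ∧
      x = ∑ i : Fin (t + 1), α i • geneV t (m + (i : ℕ)) }

/-- The normal vector `u_l = -((l div t)+1)·t·e₀ + t·e_{l mod t} + e_t`. -/
noncomputable def normalU (t : ℕ) (l : ℕ) : Fin (t + 1) → ℝ := fun j =>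
  (if (j : ℕ) = 0 then -(((l / t + 1) * t : ℕ) : ℝ) else 0)
    + (if (j : ℕ) = l % t then (t : ℝ) else 0)
    + (if (j : ℕ) = t then 1 else 0)

/-- Standard inner product on `ℝ^{t+1}`. -/
noncomputable def sprod {n : ℕ} (u x : Fin n → ℝ) : ℝ := ∑ j, u j * x j

lemma add_div_mod_le (t l d : ℕ) (ht : 0 < t) (hd : d ≤ t) :
    (l % t + d < t ∧ (l + d) / t = l / t ∧ (l + d) % t = l % t + d) ∨
    (t ≤ l % t + d ∧ (l + d) / t = l / t + 1 ∧ (l + d) % t = l % t + d - t) := by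
  have hlt : l % t < t := Nat.mod_lt _ ht
  have hdm := Nat.div_add_mod' l t
  have h1 : l + d = (l % t + d) + (l / t) * t := by omega
  by_cases hc : l % t + d < t
  · left
    refine ⟨hc, ?_, ?_⟩
    · rw [h1, Nat.add_mul_div_right _ _ ht, Nat.div_eq_of_lt hc]; omega
    · rw [h1, Nat.add_mul_mod_self_right, Nat.mod_eq_of_lt hc]
  · right
    refine ⟨by omega, ?_, ?_⟩
    · rw [h1, Nat.add_mul_div_right _ _ ht]
      have h2 : l % t + d = (l % t + d - t) + t := by omega
      rw [h2, Nat.add_div_right _ ht, Nat.div_eq_of_lt (by omega)]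
      omega
    · rw [h1, Nat.add_mul_mod_self_right]
      have h2 : l % t + d = (l % t + d - t) + t := by omega
      rw [h2, Nat.add_mod_right, Nat.mod_eq_of_lt (by omega)]
      omega

lemma mod_small' (t a : ℕ) (ht : 0 < t) (h : a < 2 * t) :
    a % t = if a < t then a else a - t := by
  split
  · exact Nat.mod_eq_of_lt ‹_›
  · rw [Nat.mod_eq_sub_mod (by omega), Nat.mod_eq_of_lt (by omega)]

lemma sum_ite_coord (t : ℕ) (x : Fin (t + 1) → ℝ) (c : ℕ) (hc : c < t + 1) (v : ℝ) :
    ∑ j : Fin (t + 1), (if (j : ℕ) = c then v else 0) * x j = v * x ⟨c, hc⟩ := by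
  rw [Finset.sum_eq_single (⟨c, hc⟩ : Fin (t + 1))]
  · simp
  · intro b _ hb
    have : ¬ ((b : ℕ) = c) := fun h => hb (Fin.ext h)
    simp [this]
  · simp

lemma sprod_normalU_apply (t l : ℕ) (ht : 0 < t) (x : Fin (t + 1) → ℝ) :
    sprod (normalU t l) x
      = t * x ⟨l % t, by have := Nat.mod_lt l ht; omega⟩ + x ⟨t, by omega⟩
        - (((l / t + 1) * t : ℕ) : ℝ) * x 0 := by
  have hlt : l % t < t + 1 := by have := Nat.mod_lt l ht; omega
  simp only [sprod, normalU, add_mul, Finset.sum_add_distrib]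
  rw [sum_ite_coord t x 0 (by omega), sum_ite_coord t x (l % t) hlt,
    sum_ite_coord t x t (by omega)]
  have h0 : (⟨0, by omega⟩ : Fin (t + 1)) = 0 := rfl
  rw [h0]
  ring

lemma geneV_coord_lt (t i : ℕ) (j : ℕ) (hj : j < t) (h : j < t + 1) :
    geneV t i ⟨j, h⟩ = if j ≤ (i - 1) % t then 1 else 0 := by
  simp [geneV, Nat.ne_of_lt hj]

lemma geneV_coord_last (t i : ℕ) (h : t < t + 1) :
    geneV t i ⟨t, h⟩ = (((i - 1) / t * t : ℕ) : ℝ) := by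
  simp [geneV]

lemma sprod_uv (t l i : ℕ) (ht : 0 < t) :
    sprod (normalU t l) (geneV t i)
      = t * (if l % t ≤ (i - 1) % t then 1 else 0)
        + ((i - 1) / t * t : ℕ) - (((l / t + 1) * t : ℕ) : ℝ) := by
  rw [sprod_normalU_apply t l ht]
  rw [geneV_coord_lt t i (l % t) (Nat.mod_lt _ ht), geneV_coord_last,
    show (0 : Fin (t+1)) = ⟨0, by omega⟩ from rfl, geneV_coord_lt t i 0 ht]
  simp

lemma sprod_uv_zero (t l i : ℕ) (ht : 0 < t) (h1 : l + 1 ≤ i) (h2 : i ≤ l + t) :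
    sprod (normalU t l) (geneV t i) = 0 := by
  rw [sprod_uv t l i ht]
  have hd : i - 1 = l + (i - 1 - l) := by omega
  rcases add_div_mod_le t l (i - 1 - l) ht (by omega) with ⟨hc, hq, hr⟩ | ⟨hc, hq, hr⟩
  · rw [hd, hq, hr, if_pos (by omega)]
    push_cast
    ring
  · have hml : l % t < t := Nat.mod_lt _ ht
    rw [hd, hq, hr, if_neg (by omega)]
    push_cast
    ring

lemma sprod_uv_t (t l : ℕ) (ht : 0 < t) :
    sprod (normalU t l) (geneV t (l + t + 1)) = t := by
  rw [sprod_uv t l (l + t + 1) ht]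
  have hd : l + t + 1 - 1 = l + t := by omega
  rcases add_div_mod_le t l t ht (le_refl t) with ⟨hc, hq, hr⟩ | ⟨hc, hq, hr⟩
  · have := Nat.mod_lt l ht; omega
  · rw [hd, hq, hr, if_pos (by omega)]
    push_cast
    ring

lemma sprod_uv_self (t l : ℕ) (ht : 0 < t) (hl : 1 ≤ l) :
    sprod (normalU t l) (geneV t l) = -t := by
  rw [sprod_uv t l l ht]
  have hd : l = (l - 1) + 1 := by omega
  have hml : (l - 1) % t < t := Nat.mod_lt _ ht
  rcases add_div_mod_le t (l - 1) 1 ht (by omega) with ⟨hc, hq, hr⟩ | ⟨hc, hq, hr⟩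
  · rw [show l / t = (l-1) / t from by rw [hd]; exact hq,
      show l % t = (l-1) % t + 1 from by rw [hd]; exact hr, if_neg (by omega)]
    push_cast
    ring
  · rw [show l / t = (l-1) / t + 1 from by rw [hd]; exact hq,
      show l % t = (l-1) % t + 1 - t from by rw [hd]; exact hr, if_pos (by omega)]
    push_cast
    ring

lemma sprod_sum (t : ℕ) (u : Fin (t + 1) → ℝ) (α : Fin (t + 1) → ℝ)
    (v : Fin (t + 1) → Fin (t + 1) → ℝ) :
    sprod u (∑ i : Fin (t + 1), α i • v i) = ∑ i : Fin (t + 1), α i * sprod u (v i) := by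
  simp only [sprod, Finset.sum_apply, Pi.smul_apply, smul_eq_mul, Finset.mul_sum]
  rw [Finset.sum_comm]
  apply Finset.sum_congr rfl
  intro i _
  apply Finset.sum_congr rfl
  intro j _
  ring

lemma geneV_apply_lt (t i : ℕ) (j : Fin (t + 1)) (hj : (j : ℕ) < t) :
    geneV t i j = if (j : ℕ) ≤ (i - 1) % t then 1 else 0 := by
  simp [geneV, Nat.ne_of_lt hj]

lemma coneC_subset (t m : ℕ) (ht : 0 < t) (hm : 1 ≤ m) :
    ∀ x ∈ coneC t m,
      (∀ i j : Fin (t + 1), i ≤ j → (j : ℕ) < t → x j ≤ x i) ∧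
      (∀ i : Fin (t + 1), (i : ℕ) < t → 0 ≤ x i) ∧
      0 ≤ sprod (normalU t (m - 1)) x ∧
      sprod (normalU t m) x < 0 := by
  rintro x ⟨α, hα0, hαnn, rfl⟩
  have hcoord : ∀ j : Fin (t + 1),
      (∑ i : Fin (t + 1), α i • geneV t (m + (i : ℕ))) j
        = ∑ i : Fin (t + 1), α i * geneV t (m + (i : ℕ)) j := by
    intro j; simp
  refine ⟨?_, ?_, ?_, ?_⟩
  · intro i j hij hjt
    rw [hcoord, hcoord]
    apply Finset.sum_le_sum
    intro i' _
    apply mul_le_mul_of_nonneg_left _ (hαnn i')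
    rw [geneV_apply_lt _ _ _ hjt, geneV_apply_lt _ _ _ (lt_of_le_of_lt hij hjt)]
    have hij' : (i : ℕ) ≤ (j : ℕ) := hij
    split_ifs with h1 h2 <;> norm_num
    exact absurd (le_trans hij' h1) h2
  · intro j hjt
    rw [hcoord]
    apply Finset.sum_nonneg
    intro i' _
    apply mul_nonneg (hαnn i')
    rw [geneV_apply_lt _ _ _ hjt]
    split_ifs <;> norm_num
  · rw [sprod_sum, Finset.sum_eq_single (Fin.last t)]
    · have hv : m + ((Fin.last t : Fin (t + 1)) : ℕ) = (m - 1) + t + 1 := by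
        simp [Fin.last]; omega
      rw [hv, sprod_uv_t t (m - 1) ht]
      exact mul_nonneg (hαnn _) (by positivity)
    · intro i _ hi
      have hi' : (i : ℕ) < t := by
        rcases Nat.lt_succ_iff_lt_or_eq.mp i.isLt with h | h
        · exact h
        · exact absurd (Fin.ext h) hi
      rw [sprod_uv_zero t (m - 1) (m + i) ht (by omega) (by omega), mul_zero]
    · intro h; exact absurd (Finset.mem_univ _) h
  · rw [sprod_sum, Finset.sum_eq_single 0]
    · have hv : m + ((0 : Fin (t + 1)) : ℕ) = m := by simp
      rw [hv, sprod_uv_self t m ht hm]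
      have : (0 : ℝ) < t := by exact_mod_cast ht
      exact mul_neg_of_pos_of_neg hα0 (by linarith)
    · intro i _ hi
      have hi' : 1 ≤ (i : ℕ) := by
        rcases Nat.eq_zero_or_pos (i : ℕ) with h | h
        · exact absurd (Fin.ext h) hi
        · exact h
      have hi'' : (i : ℕ) ≤ t := by omega
      rw [sprod_uv_zero t m (m + i) ht (by omega) (by omega), mul_zero]
    · intro h; exact absurd (Finset.mem_univ _) h

lemma sprod_normalU_antitone (t : ℕ) (ht : 0 < t) (x : Fin (t + 1) → ℝ)
    (hchain : ∀ i j : Fin (t + 1), i ≤ j → (j : ℕ) < t → x j ≤ x i)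
    (hnn : ∀ i : Fin (t + 1), (i : ℕ) < t → 0 ≤ x i) :
    Antitone (fun l => sprod (normalU t l) x) := by
  have hx : ∀ (a b : ℕ) (ha : a < t + 1) (hb : b < t + 1), a = b →
      x ⟨a, ha⟩ = x ⟨b, hb⟩ := by
    intro a b ha hb h
    subst h; rfl
  have ht' : (0 : ℝ) < t := by exact_mod_cast ht
  apply antitone_nat_of_succ_le
  intro l
  rw [sprod_normalU_apply t l ht, sprod_normalU_apply t (l + 1) ht]
  have hml : l % t < t := Nat.mod_lt _ ht
  rcases add_div_mod_le t l 1 ht (by omega) with ⟨hc, hq, hr⟩ | ⟨hc, hq, hr⟩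
  · rw [hq, hx ((l+1) % t) (l % t + 1) _ (by omega) hr]
    have hle : x ⟨l % t + 1, by omega⟩ ≤ x ⟨l % t, by omega⟩ := by
      apply hchain _ _ _ hc
      simp [Fin.le_def]
    nlinarith [mul_le_mul_of_nonneg_left hle ht'.le]
  · have hr0 : (l + 1) % t = 0 := by omega
    rw [hq, hx ((l+1) % t) 0 _ (by omega) hr0]
    have h0 : x ⟨0, by omega⟩ = x 0 := rfl
    have hnn' : 0 ≤ x ⟨l % t, by omega⟩ := hnn _ hml
    rw [h0]
    push_cast
    nlinarith

lemma sum_shift (t r : ℕ) (ht : 0 < t) (hr : r < t) (f : ℕ → ℝ) :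
    ∑ n ∈ Finset.range t, f ((r + n) % t) = ∑ s ∈ Finset.range t, f s := by
  apply Finset.sum_nbij' (i := fun n => (r + n) % t)
    (j := fun s => if r ≤ s then s - r else s + t - r)
  · intro a ha
    simp only [Finset.mem_range] at *
    exact Nat.mod_lt _ ht
  · intro a ha
    simp only [Finset.mem_range] at *
    split_ifs <;> omega
  · intro a ha
    simp only [Finset.mem_range] at ha
    rw [mod_small' t (r + a) ht (by omega)]
    split_ifs <;> omega
  · intro a ha
    simp only [Finset.mem_range] at ha
    split_ifs with h
    · rw [mod_small' t (r + (a - r)) ht (by omega)]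
      split_ifs <;> omega
    · rw [mod_small' t (r + (a + t - r)) ht (by omega)]
      split_ifs <;> omega
  · intro a _
    rfl

lemma subset_coneC (t m : ℕ) (ht : 0 < t) (hm : 1 ≤ m) (x : Fin (t + 1) → ℝ)
    (hchain : ∀ i j : Fin (t + 1), i ≤ j → (j : ℕ) < t → x j ≤ x i)
    (hnn : ∀ i : Fin (t + 1), (i : ℕ) < t → 0 ≤ x i)
    (h1 : 0 ≤ sprod (normalU t (m - 1)) x)
    (h2 : sprod (normalU t m) x < 0) :
    x ∈ coneC t m := by
  have ht' : (0 : ℝ) < t := by exact_mod_cast ht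
  obtain ⟨q, r, hrt, hmqr⟩ : ∃ q r, r < t ∧ m - 1 = t * q + r :=
    ⟨(m - 1) / t, (m - 1) % t, Nat.mod_lt _ ht, (Nat.div_add_mod (m - 1) t).symm⟩
  have hmod0 : (m - 1) % t = r := by
    rw [hmqr, Nat.mul_add_mod, Nat.mod_eq_of_lt hrt]
  have hdiv0 : (m - 1) / t = q := by
    rw [hmqr, Nat.mul_add_div ht, Nat.div_eq_of_lt hrt, Nat.add_zero]
  have hx : ∀ (a b : ℕ) (ha : a < t + 1) (hb : b < t + 1), a = b →
      x ⟨a, ha⟩ = x ⟨b, hb⟩ := by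
    intro a b ha hb h; subst h; rfl
  -- the truncated coordinate function
  set y : ℕ → ℝ := fun j => if h : j < t then x ⟨j, by omega⟩ else 0 with hy
  have hyr : ∀ (j : ℕ) (hj : j < t), y j = x ⟨j, by omega⟩ := by
    intro j hj; simp only [hy, dif_pos hj]
  have hyt0 : ∀ j, t ≤ j → y j = 0 := by
    intro j hj; simp only [hy, dif_neg (by omega : ¬ j < t)]
  have hyanti : ∀ a b : ℕ, a ≤ b → y b ≤ y a := by
    intro a b hab
    by_cases hbt : b < t
    · rw [hyr a (by omega), hyr b hbt]
      exact hchain _ _ (by simp [Fin.le_def]; omega) hbt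
    · rw [hyt0 b (by omega)]
      by_cases hat : a < t
      · rw [hyr a hat]; exact hnn _ hat
      · rw [hyt0 a (by omega)]
  have hynn : ∀ a, 0 ≤ y a := by
    intro a
    by_cases hat : a < t
    · rw [hyr a hat]; exact hnn _ hat
    · rw [hyt0 a (by omega)]
  -- successive differences
  set c : ℕ → ℝ := fun j => y j - y (j + 1) with hc
  have hcnn : ∀ j, 0 ≤ c j := fun j => sub_nonneg.mpr (hyanti j (j + 1) (by omega))
  have hrangec : ∀ n : ℕ, ∑ j ∈ Finset.range n, c j = y 0 - y n := by
    intro n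
    exact Finset.sum_range_sub' y n
  have htel : ∀ a : ℕ, a ≤ t → ∑ j ∈ Finset.Ico a t, c j = y a := by
    intro a hat
    rw [Finset.sum_Ico_eq_sub _ hat, hrangec, hrangec, hyt0 t (le_refl t)]
    ring
  -- the two inner products
  have hS0 : sprod (normalU t (m - 1)) x
      = t * y r + x ⟨t, by omega⟩ - ((q : ℝ) + 1) * t * y 0 := by
    rw [sprod_normalU_apply t (m - 1) ht, hx ((m - 1) % t) r _ (by omega) hmod0,
      hdiv0, ← hyr r hrt, show x 0 = x ⟨0, by omega⟩ from rfl, ← hyr 0 ht]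
    push_cast
    ring
  -- div/mod of m
  have hm1 : m = (m - 1) + 1 := by omega
  have hK : sprod (normalU t (m - 1)) x - sprod (normalU t m) x = t * c r := by
    rcases add_div_mod_le t (m - 1) 1 ht (by omega) with ⟨hcc, hq, hr⟩ | ⟨hcc, hq, hr⟩
    · rw [← hm1] at hq hr
      rw [sprod_normalU_apply t (m - 1) ht, sprod_normalU_apply t m ht,
        hx ((m - 1) % t) r _ (by omega) hmod0, hx (m % t) (r + 1) _ (by omega) (by omega),
        hdiv0, hq, hdiv0, ← hyr r hrt, ← hyr (r + 1) (by omega), show c r = y r - y (r + 1) from rfl]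
      push_cast
      ring
    · rw [← hm1] at hq hr
      rw [sprod_normalU_apply t (m - 1) ht, sprod_normalU_apply t m ht,
        hx ((m - 1) % t) r _ (by omega) hmod0, hx (m % t) 0 _ (by omega) (by omega),
        hdiv0, hq, hdiv0, ← hyr r hrt, show x ⟨0, by omega⟩ = x 0 from rfl,
        show c r = y r - y (r + 1) from rfl,
        hyt0 (r + 1) (by omega), show x 0 = x ⟨0, by omega⟩ from rfl, ← hyr 0 ht]
      push_cast
      ring
  -- the coefficients
  set A : ℕ → ℝ := fun n =>
    if n = 0 then (-sprod (normalU t m) x) / t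
    else if n = t then sprod (normalU t (m - 1)) x / t
    else c ((r + n) % t) with hA
  have hA0 : A 0 = (-sprod (normalU t m) x) / t := by simp [hA]
  have hAt : A t = sprod (normalU t (m - 1)) x / t := by
    simp only [hA]
    rw [if_neg (by omega : ¬ (t = 0))]
    simp
  have hAmid : ∀ n, 1 ≤ n → n < t → A n = c ((r + n) % t) := by
    intro n h1n h2n
    simp only [hA]
    rw [if_neg (by omega), if_neg (by omega)]
  refine ⟨fun i => A (i : ℕ), ?_, ?_, ?_⟩
  · show (0 : ℝ) < A ((0 : Fin (t + 1)) : ℕ)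
    rw [show ((0 : Fin (t + 1)) : ℕ) = 0 from rfl, hA0]
    apply div_pos (by linarith) ht'
  · intro i
    simp only [hA]
    split_ifs
    · apply div_nonneg (by linarith) ht'.le
    · exact div_nonneg h1 ht'.le
    · exact hcnn _
  · -- the reconstruction identity
    have hA0' : (t : ℝ) * A 0 = -sprod (normalU t m) x := by
      rw [hA0]; field_simp
    have hAt' : (t : ℝ) * A t = sprod (normalU t (m - 1)) x := by
      rw [hAt]; field_simp
    have hmm : ∀ n : ℕ, (m + n - 1) % t = (r + n) % t := by
      intro n
      rw [show m + n - 1 = (m - 1) + n from by omega, ← Nat.mod_add_mod, hmod0]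
    funext j
    show x j = (∑ i : Fin (t + 1), A (i : ℕ) • geneV t (m + (i : ℕ))) j
    have hsum : (∑ i : Fin (t + 1), A (i : ℕ) • geneV t (m + (i : ℕ))) j
        = ∑ n ∈ Finset.range (t + 1), A n * geneV t (m + n) j := by
      simp only [Finset.sum_apply, Pi.smul_apply, smul_eq_mul]
      exact Fin.sum_univ_eq_sum_range (fun n => A n * geneV t (m + n) j) (t + 1)
    have hsplit : Finset.range (t + 1) = insert 0 (insert t (Finset.Ico 1 t)) := by
      ext a
      simp only [Finset.mem_range, Finset.mem_insert, Finset.mem_Ico]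
      omega
    have h0notin : (0 : ℕ) ∉ insert t (Finset.Ico 1 t) := by
      simp only [Finset.mem_insert, Finset.mem_Ico]
      omega
    have htnotin : t ∉ Finset.Ico 1 t := by simp
    rw [hsum, hsplit, Finset.sum_insert h0notin, Finset.sum_insert htnotin]
    have hrange : Finset.range t = insert 0 (Finset.Ico 1 t) := by
      ext a
      simp only [Finset.mem_range, Finset.mem_insert, Finset.mem_Ico]
      omega
    have h0notin' : (0 : ℕ) ∉ Finset.Ico 1 t := by simp
    by_cases hjt : (j : ℕ) = t
    · -- last coordinate
      have hj : j = ⟨t, by omega⟩ := Fin.ext hjt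
      rw [hj]
      have hV : ∀ n : ℕ, geneV t (m + n) (⟨t, by omega⟩ : Fin (t + 1))
          = (((m + n - 1) / t * t : ℕ) : ℝ) := fun n => geneV_coord_last t (m + n) _
      have hV0 : geneV t (m + 0) (⟨t, by omega⟩ : Fin (t + 1)) = (q : ℝ) * t := by
        rw [hV 0, show m + 0 - 1 = m - 1 from by omega, hdiv0]
        push_cast; ring
      have hVt : geneV t (m + t) (⟨t, by omega⟩ : Fin (t + 1)) = ((q : ℝ) + 1) * t := by
        rw [hV t]
        rcases add_div_mod_le t (m - 1) t ht (le_refl t) with ⟨hcc, hq, hr⟩ | ⟨hcc, hq, hr⟩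
        · have := Nat.mod_lt (m - 1) ht; omega
        · rw [show m + t - 1 = (m - 1) + t from by omega, hq, hdiv0]
          push_cast; ring
      set f : ℕ → ℝ := fun s => c s * ((q : ℝ) * t + t * (if s < r then 1 else 0)) with hf
      have hmid : ∀ n ∈ Finset.Ico 1 t,
          A n * geneV t (m + n) (⟨t, by omega⟩ : Fin (t + 1)) = f ((r + n) % t) := by
        intro n hn
        simp only [Finset.mem_Ico] at hn
        rw [hAmid n hn.1 (by omega), hV n, hf]
        simp only
        have hdd := add_div_mod_le t (m - 1) n ht (by omega)
        rw [hmod0, hdiv0] at hdd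
        rw [mod_small' t (r + n) ht (by omega),
          show m + n - 1 = (m - 1) + n from by omega]
        rcases hdd with ⟨hcc, hq, hr⟩ | ⟨hcc, hq, hr⟩
        · rw [hq, if_pos (by omega), if_neg (by omega)]
          push_cast; ring
        · rw [hq, if_neg (by omega), if_pos (by omega)]
          push_cast; ring
      rw [Finset.sum_congr rfl hmid]
      have e1 : ∑ n ∈ Finset.range t, f ((r + n) % t)
          = f ((r + 0) % t) + ∑ n ∈ Finset.Ico 1 t, f ((r + n) % t) := by
        rw [hrange, Finset.sum_insert h0notin']
      have e2 : f ((r + 0) % t) = c r * ((q : ℝ) * t) := by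
        rw [show (r + 0) % t = r from by rw [Nat.add_zero, Nat.mod_eq_of_lt hrt], hf]
        simp only
        rw [if_neg (by omega)]
        ring
      have e3 : ∑ n ∈ Finset.range t, f ((r + n) % t) = ∑ s ∈ Finset.range t, f s :=
        sum_shift t r ht hrt f
      have e4 : ∑ s ∈ Finset.range t, f s
          = (q : ℝ) * t * y 0 + t * (y 0 - y r) := by
        have e5 : ∀ s ∈ Finset.range t, f s
            = (q : ℝ) * t * c s + t * (if s < r then c s else 0) := by
          intro s _
          rw [hf]
          simp only
          split_ifs <;> ring
        rw [Finset.sum_congr rfl e5, Finset.sum_add_distrib, ← Finset.mul_sum,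
          ← Finset.mul_sum, ← Finset.sum_filter,
          show Finset.filter (fun s => s < r) (Finset.range t) = Finset.range r from by
            ext a
            simp only [Finset.mem_filter, Finset.mem_range]
            omega,
          hrangec, hrangec, hyt0 t (le_refl t)]
        ring
      have e6 : ∑ n ∈ Finset.Ico 1 t, f ((r + n) % t)
          = (q : ℝ) * t * y 0 + t * (y 0 - y r) - c r * ((q : ℝ) * t) := by
        rw [← e4, ← e3]
        linarith [e1, e2]
      rw [e6, hV0, hVt]
      have hxt : x ⟨t, by omega⟩ = x ⟨t, by omega⟩ := rfl
      rw [show x ⟨t, (by omega : t < t + 1)⟩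
          = x ⟨t, (by omega : t < t + 1)⟩ from rfl] at hS0
      linear_combination (-(q : ℝ)) * hA0' - ((q : ℝ) + 1) * hAt' - (q : ℝ) * hK - hS0
    · -- coordinates below t
      have hjv : (j : ℕ) < t := by have := j.isLt; omega
      have hVlt : ∀ n : ℕ, geneV t (m + n) j
          = if (j : ℕ) ≤ (r + n) % t then (1 : ℝ) else 0 := by
        intro n
        rw [geneV_apply_lt t (m + n) j hjv, hmm n]
      have hV0 : geneV t (m + 0) j = if (j : ℕ) ≤ r then (1 : ℝ) else 0 := by
        rw [hVlt 0, show (r + 0) % t = r from by rw [Nat.add_zero, Nat.mod_eq_of_lt hrt]]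
      have hVt : geneV t (m + t) j = if (j : ℕ) ≤ r then (1 : ℝ) else 0 := by
        rw [hVlt t, Nat.add_mod_right, Nat.mod_eq_of_lt hrt]
      set g : ℕ → ℝ := fun s => c s * (if (j : ℕ) ≤ s then (1 : ℝ) else 0) with hg
      have hmid : ∀ n ∈ Finset.Ico 1 t,
          A n * geneV t (m + n) j = g ((r + n) % t) := by
        intro n hn
        simp only [Finset.mem_Ico] at hn
        rw [hAmid n hn.1 (by omega), hVlt n, hg]
      rw [Finset.sum_congr rfl hmid]
      have e1 : ∑ n ∈ Finset.range t, g ((r + n) % t)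
          = g ((r + 0) % t) + ∑ n ∈ Finset.Ico 1 t, g ((r + n) % t) := by
        rw [hrange, Finset.sum_insert h0notin']
      have e2 : g ((r + 0) % t) = c r * (if (j : ℕ) ≤ r then (1 : ℝ) else 0) := by
        rw [show (r + 0) % t = r from by rw [Nat.add_zero, Nat.mod_eq_of_lt hrt], hg]
      have e3 : ∑ n ∈ Finset.range t, g ((r + n) % t) = ∑ s ∈ Finset.range t, g s :=
        sum_shift t r ht hrt g
      have e4 : ∑ s ∈ Finset.range t, g s = y (j : ℕ) := by
        have e5 : ∀ s ∈ Finset.range t, g s = if (j : ℕ) ≤ s then c s else 0 := by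
          intro s _
          rw [hg]
          simp only
          split_ifs <;> ring
        rw [Finset.sum_congr rfl e5, ← Finset.sum_filter,
          show Finset.filter (fun s => (j : ℕ) ≤ s) (Finset.range t)
              = Finset.Ico ((j : ℕ)) t from by
            ext a
            simp only [Finset.mem_filter, Finset.mem_range, Finset.mem_Ico]
            omega,
          htel _ (by omega)]
      have e6 : ∑ n ∈ Finset.Ico 1 t, g ((r + n) % t)
          = y (j : ℕ) - c r * (if (j : ℕ) ≤ r then (1 : ℝ) else 0) := by
        rw [← e4, ← e3]
        linarith [e1, e2]
      rw [e6, hV0, hVt]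
      have hcr : A 0 + A t = c r := by
        apply mul_left_cancel₀ (ne_of_gt ht')
        rw [mul_add, hA0', hAt']
        linarith [hK]
      have hxj : y (j : ℕ) = x j := by
        rw [hyr _ hjv]
      split_ifs with hχ
      · linarith [hcr, hxj]
      · linarith [hxj]

/-- For every `k ≥ 1`,
`⋃_{m=1}^k C_m = {x : x₀ ≥ … ≥ x_{t-1} ≥ 0, ⟨u₀,x⟩ ≥ 0, ⟨u_k,x⟩ < 0}`. -/
theorem union_of_cones_up_to_k (t : ℕ) (ht : 1 ≤ t) (k : ℕ) (hk : 1 ≤ k) :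
    (⋃ m ∈ Finset.Icc 1 k, coneC t m)
      = { x : Fin (t + 1) → ℝ |
          (∀ i j : Fin (t + 1), i ≤ j → (j : ℕ) < t → x j ≤ x i) ∧
          (∀ i : Fin (t + 1), (i : ℕ) < t → 0 ≤ x i) ∧
          0 ≤ sprod (normalU t 0) x ∧
          sprod (normalU t k) x < 0 } := by
  classical
  ext x
  simp only [Set.mem_iUnion, Set.mem_setOf_eq, exists_prop]
  constructor
  · rintro ⟨m, hmIcc, hxm⟩
    rw [Finset.mem_Icc] at hmIcc
    obtain ⟨hchain, hnn, hS0, hSm⟩ := coneC_subset t m ht hmIcc.1 x hxm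
    have hanti := sprod_normalU_antitone t ht x hchain hnn
    exact ⟨hchain, hnn, le_trans hS0 (hanti (Nat.zero_le (m - 1))),
      lt_of_le_of_lt (hanti hmIcc.2) hSm⟩
  · rintro ⟨hchain, hnn, h0, hk'⟩
    have hex : ∃ l, sprod (normalU t l) x < 0 := ⟨k, hk'⟩
    have hm := Nat.find_spec hex
    have hmk : Nat.find hex ≤ k := Nat.find_min' hex hk'
    have hm1 : 1 ≤ Nat.find hex := by
      rcases Nat.eq_zero_or_pos (Nat.find hex) with h | h
      · rw [h] at hm; linarith
      · exact h
    have hprev : ¬ sprod (normalU t (Nat.find hex - 1)) x < 0 :=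
      Nat.find_min hex (by omega)
    exact ⟨Nat.find hex, Finset.mem_Icc.mpr ⟨hm1, hmk⟩,
      subset_coneC t (Nat.find hex) ht hm1 x hchain hnn (not_lt.mp hprev) hm⟩
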